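/- Let Ω₁, Ω₂ be domains in ℂ, φ: Ω₁ → Ω₂ a biholomorphism with inverse Φ, and suppose Ω₁ is a quadrature domain of finite area so that its Bergman kernel satisfies 1 = Σ_{j,m} c_{jm} K₁^{(m)}(z, w_j) on Ω₁. Then Φ'(z) = Σ_{j,m} c_{jm} (∂^m/∂w̄^m)[K₂(z, φ(w)) conj(φ'(w))]|_{w=w_j} for all z ∈ Ω₂; in particular, Φ' is a finite linear combination of functions z ↦ (∂^m/∂W̄^m)K₂(z, W) at points W ∈ Ω₂. -/

import Mathlib

open MeasureTheory Complex
open scoped ENNReal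
set_option maxHeartbeats 1000000

/-- Membership in the Bergman space `A²(Ω)` of square-integrable holomorphic
functions on `Ω`. -/
def InBergmanSpace (Ω : Set ℂ) (f : ℂ → ℂ) : Prop :=
  DifferentiableOn ℂ f Ω ∧ Integrable (fun z => ‖f z‖ ^ 2) (volume.restrict Ω)

/-- `K` is the Bergman kernel of `Ω`. -/
def IsBergmanKernel (Ω : Set ℂ) (K : ℂ → ℂ → ℂ) : Prop :=
  (∀ z ∈ Ω, InBergmanSpace Ω fun w => K w z) ∧
  (∀ f : ℂ → ℂ, InBergmanSpace Ω f → ∀ z ∈ Ω,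
    f z = ∫ w in Ω, f w * starRingEnd ℂ (K w z))

/-- The `m`-th antiholomorphic derivative `(∂^m/∂w̄^m) F(w)` of an antiholomorphic
function `F`, computed as the conjugate of the `m`-th derivative of its conjugate. -/
noncomputable def antibarDeriv (m : ℕ) (F : ℂ → ℂ) (w : ℂ) : ℂ :=
  starRingEnd ℂ (iteratedDeriv m (fun u => starRingEnd ℂ (F u)) w)

private lemma iteratedDeriv_congr' : ∀ (n : ℕ) {f g : ℂ → ℂ} {x : ℂ}, f =ᶠ[nhds x] g →
    iteratedDeriv n f x = iteratedDeriv n g x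
  | 0, f, g, x, h => by simpa using h.self_of_nhds
  | (n+1), f, g, x, h => by
      rw [iteratedDeriv_succ', iteratedDeriv_succ']
      exact iteratedDeriv_congr' n h.deriv

private lemma iteratedDeriv_cmul (c : ℂ) : ∀ (n : ℕ) (f : ℂ → ℂ) (x : ℂ),
    iteratedDeriv n (fun y => c * f y) x = c * iteratedDeriv n f x
  | 0, f, x => by simp
  | (n+1), f, x => by
      rw [iteratedDeriv_succ', iteratedDeriv_succ']
      have h : deriv (fun y => c * f y) = fun y => c * deriv f y :=
        funext fun y => deriv_const_mul_field c
      rw [h]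
      exact iteratedDeriv_cmul c n (deriv f) x

private lemma deriv_diffOn {s : Set ℂ} (hs : IsOpen s) {f : ℂ → ℂ}
    (hf : DifferentiableOn ℂ f s) : DifferentiableOn ℂ (deriv f) s :=
  ((hf.analyticOnNhd hs).deriv).differentiableOn

private lemma iteratedDeriv_add_on {s : Set ℂ} (hs : IsOpen s) :
    ∀ (n : ℕ) (f g : ℂ → ℂ), DifferentiableOn ℂ f s → DifferentiableOn ℂ g s →
    ∀ x ∈ s, iteratedDeriv n (fun y => f y + g y) x = iteratedDeriv n f x + iteratedDeriv n g x
  | 0, f, g, _, _, x, _ => by simp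
  | (n+1), f, g, hf, hg, x, hx => by
      rw [iteratedDeriv_succ', iteratedDeriv_succ', iteratedDeriv_succ']
      have hev : deriv (fun y => f y + g y) =ᶠ[nhds x] fun y => deriv f y + deriv g y := by
        filter_upwards [hs.mem_nhds hx] with y hy
        exact deriv_add (hf.differentiableAt (hs.mem_nhds hy))
          (hg.differentiableAt (hs.mem_nhds hy))
      rw [iteratedDeriv_congr' n hev]
      exact iteratedDeriv_add_on hs n _ _ (deriv_diffOn hs hf) (deriv_diffOn hs hg) x hx

private lemma faa_di_bruno {Ω₁ Ω₂ : Set ℂ} (hΩ₁ : IsOpen Ω₁) (hΩ₂ : IsOpen Ω₂)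
    {φ : ℂ → ℂ} (hφ : DifferentiableOn ℂ φ Ω₁) (hmap : Set.MapsTo φ Ω₁ Ω₂)
    {w₀ : ℂ} (hw₀ : w₀ ∈ Ω₁) :
    ∀ (m : ℕ) (g : ℂ → ℂ), DifferentiableOn ℂ g Ω₁ →
    ∃ a : ℕ → ℂ, ∀ F : ℂ → ℂ, DifferentiableOn ℂ F Ω₂ →
      iteratedDeriv m (fun u => F (φ u) * g u) w₀ =
        ∑ p ∈ Finset.range (m+1), a p * iteratedDeriv p F (φ w₀)
  | 0, g, hg => by
      refine ⟨fun _ => g w₀, fun F hF => ?_⟩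
      simp [iteratedDeriv_zero, mul_comm]
  | (m+1), g, hg => by
      obtain ⟨a₁, ha₁⟩ := faa_di_bruno hΩ₁ hΩ₂ hφ hmap hw₀ m (fun u => deriv φ u * g u)
        ((deriv_diffOn hΩ₁ hφ).mul hg)
      obtain ⟨a₂, ha₂⟩ := faa_di_bruno hΩ₁ hΩ₂ hφ hmap hw₀ m (deriv g) (deriv_diffOn hΩ₁ hg)
      refine ⟨fun p => (if p = 0 then 0 else a₁ (p-1)) + (if p ≤ m then a₂ p else 0),
        fun F hF => ?_⟩
      rw [iteratedDeriv_succ']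
      have hev : deriv (fun u => F (φ u) * g u) =ᶠ[nhds w₀]
          fun u => deriv F (φ u) * (deriv φ u * g u) + F (φ u) * deriv g u := by
        filter_upwards [hΩ₁.mem_nhds hw₀] with u hu
        have hφu : HasDerivAt φ (deriv φ u) u :=
          (hφ.differentiableAt (hΩ₁.mem_nhds hu)).hasDerivAt
        have hFu : HasDerivAt F (deriv F (φ u)) (φ u) :=
          (hF.differentiableAt (hΩ₂.mem_nhds (hmap hu))).hasDerivAt
        have hgu : HasDerivAt g (deriv g u) u :=
          (hg.differentiableAt (hΩ₁.mem_nhds hu)).hasDerivAt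
        have hcomp : HasDerivAt (fun u => F (φ u)) (deriv F (φ u) * deriv φ u) u :=
          HasDerivAt.comp u hFu hφu
        have : deriv (fun u => F (φ u) * g u) u = _ := (hcomp.mul hgu).deriv
        rw [this]; ring
      rw [iteratedDeriv_congr' m hev]
      have h1 : DifferentiableOn ℂ (fun u => deriv F (φ u) * (deriv φ u * g u)) Ω₁ :=
        ((deriv_diffOn hΩ₂ hF).comp hφ hmap).mul ((deriv_diffOn hΩ₁ hφ).mul hg)
      have h2 : DifferentiableOn ℂ (fun u => F (φ u) * deriv g u) Ω₁ :=
        (hF.comp hφ hmap).mul (deriv_diffOn hΩ₁ hg)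
      rw [iteratedDeriv_add_on hΩ₁ m (fun u => deriv F (φ u) * (deriv φ u * g u))
        (fun u => F (φ u) * deriv g u) h1 h2 w₀ hw₀]
      rw [ha₁ (deriv F) (deriv_diffOn hΩ₂ hF), ha₂ F hF]
      have key : ∀ p, iteratedDeriv p (deriv F) (φ w₀) = iteratedDeriv (p+1) F (φ w₀) :=
        fun p => by rw [← iteratedDeriv_succ']
      simp_rw [key]
      have hsplit : ∑ p ∈ Finset.range (m+1+1),
          ((if p = 0 then 0 else a₁ (p-1)) + (if p ≤ m then a₂ p else 0)) *
            iteratedDeriv p F (φ w₀)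
        = (∑ p ∈ Finset.range (m+1), a₁ p * iteratedDeriv (p+1) F (φ w₀))
          + ∑ p ∈ Finset.range (m+1), a₂ p * iteratedDeriv p F (φ w₀) := by
        simp only [add_mul, Finset.sum_add_distrib]
        congr 1
        · rw [Finset.sum_range_succ' (fun p =>
            (if p = 0 then 0 else a₁ (p-1)) * iteratedDeriv p F (φ w₀)) (m+1)]
          simp
        · rw [Finset.sum_range_succ (fun p =>
            (if p ≤ m then a₂ p else 0) * iteratedDeriv p F (φ w₀)) (m+1)]
          rw [if_neg (by omega), zero_mul, add_zero]
          exact Finset.sum_congr rfl fun p hp => by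
            rw [if_pos (Nat.lt_succ_iff.mp (Finset.mem_range.mp hp))]
      rw [hsplit]

/-- Hermitian symmetry of any reproducing kernel. -/
private lemma kernel_symm {Ω : Set ℂ} {K : ℂ → ℂ → ℂ} (hK : IsBergmanKernel Ω K)
    {z z₀ : ℂ} (hz : z ∈ Ω) (hz₀ : z₀ ∈ Ω) :
    starRingEnd ℂ (K z z₀) = K z₀ z := by
  have h1 : K z z₀ = ∫ w in Ω, K w z₀ * starRingEnd ℂ (K w z) :=
    hK.2 (fun w => K w z₀) (hK.1 z₀ hz₀) z hz
  have h2 : K z₀ z = ∫ w in Ω, K w z * starRingEnd ℂ (K w z₀) :=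
    hK.2 (fun w => K w z) (hK.1 z hz) z₀ hz₀
  rw [h1, ← integral_conj, h2]
  congr 1; ext w
  simp [mul_comm]

private lemma det_restrict (a : ℂ) :
    ((a • (1 : ℂ →L[ℂ] ℂ)).restrictScalars ℝ : ℂ →L[ℝ] ℂ).det = Complex.normSq a := by
  have h : ((a • (1 : ℂ →L[ℂ] ℂ)).restrictScalars ℝ : ℂ →L[ℝ] ℂ).toLinearMap
      = Algebra.lmul ℝ ℂ a := by
    apply LinearMap.ext; intro x; simp [Algebra.lmul]
  rw [ContinuousLinearMap.det, h, ← Algebra.norm_complex_apply]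
  rfl

private lemma hasFDeriv_phi {Ω₁ : Set ℂ} (hΩ₁ : IsOpen Ω₁) {φ : ℂ → ℂ}
    (hφ : DifferentiableOn ℂ φ Ω₁) {u : ℂ} (hu : u ∈ Ω₁) :
    HasFDerivWithinAt φ (((deriv φ u) • (1 : ℂ →L[ℂ] ℂ)).restrictScalars ℝ) Ω₁ u := by
  have h := (hφ.differentiableAt (hΩ₁.mem_nhds hu)).hasDerivAt
  have h2 : HasFDerivAt φ ((1 : ℂ →L[ℂ] ℂ).smulRight (deriv φ u)) u := h.hasFDerivAt
  have he : ((deriv φ u) • (1 : ℂ →L[ℂ] ℂ)) = (1 : ℂ →L[ℂ] ℂ).smulRight (deriv φ u) := by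
    ext x; simp [mul_comm]
  rw [he]
  exact (h2.restrictScalars ℝ).hasFDerivWithinAt

private lemma cov {Ω₁ : Set ℂ} (hΩ₁ : IsOpen Ω₁) {φ : ℂ → ℂ}
    (hφ : DifferentiableOn ℂ φ Ω₁) (hinj : Set.InjOn φ Ω₁) (G : ℂ → ℂ) :
    ∫ ζ in φ '' Ω₁, G ζ = ∫ u in Ω₁, (Complex.normSq (deriv φ u) : ℂ) * G (φ u) := by
  rw [integral_image_eq_integral_abs_det_fderiv_smul volume hΩ₁.measurableSet
    (fun u hu => hasFDeriv_phi hΩ₁ hφ hu) hinj G]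
  apply setIntegral_congr_fun hΩ₁.measurableSet
  intro u _
  simp only [det_restrict, _root_.abs_of_nonneg (Complex.normSq_nonneg _), Complex.real_smul]

private lemma covInt {Ω₁ : Set ℂ} (hΩ₁ : IsOpen Ω₁) {φ : ℂ → ℂ}
    (hφ : DifferentiableOn ℂ φ Ω₁) (hinj : Set.InjOn φ Ω₁) (g : ℂ → ℝ) :
    IntegrableOn g (φ '' Ω₁) volume ↔
      IntegrableOn (fun u => Complex.normSq (deriv φ u) * g (φ u)) Ω₁ volume := by
  rw [integrableOn_image_iff_integrableOn_abs_det_fderiv_smul volume hΩ₁.measurableSet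
    (fun u hu => hasFDeriv_phi hΩ₁ hφ hu) hinj g]
  have h : (fun u => |(((deriv φ u) • (1 : ℂ →L[ℂ] ℂ)).restrictScalars ℝ :
      ℂ →L[ℝ] ℂ).det| • g (φ u)) = fun u => Complex.normSq (deriv φ u) * g (φ u) := by
    funext u
    rw [det_restrict, _root_.abs_of_nonneg (Complex.normSq_nonneg _), smul_eq_mul]
  rw [h]

private lemma deriv_comp_inverse {s t : Set ℂ} (hs : IsOpen s) (ht : IsOpen t)
    {φ Φ : ℂ → ℂ} (hφ : DifferentiableOn ℂ φ s) (hΦ : DifferentiableOn ℂ Φ t)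
    (hmaps : Set.MapsTo φ s t) (hinv : ∀ u ∈ s, Φ (φ u) = u) :
    ∀ u ∈ s, deriv Φ (φ u) * deriv φ u = 1 := by
  intro u hu
  have hφu : HasDerivAt φ (deriv φ u) u := (hφ.differentiableAt (hs.mem_nhds hu)).hasDerivAt
  have hΦu : HasDerivAt Φ (deriv Φ (φ u)) (φ u) :=
    (hΦ.differentiableAt (ht.mem_nhds (hmaps hu))).hasDerivAt
  have hcomp : HasDerivAt (fun x => Φ (φ x)) (deriv Φ (φ u) * deriv φ u) u := hΦu.comp u hφu
  have hev : (fun x => Φ (φ x)) =ᶠ[nhds u] id := by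
    filter_upwards [hs.mem_nhds hu] with x hx
    exact hinv x hx
  have hid : HasDerivAt id (deriv Φ (φ u) * deriv φ u) u := hcomp.congr_of_eventuallyEq hev.symm
  have h1 := hid.deriv
  rw [deriv_id] at h1
  exact h1.symm

private lemma integrable_mul_L2 {s : Set ℂ} {f g : ℂ → ℂ}
    (hf : AEStronglyMeasurable f (volume.restrict s))
    (hg : AEStronglyMeasurable g (volume.restrict s))
    (hf2 : Integrable (fun z => ‖f z‖ ^ 2) (volume.restrict s))
    (hg2 : Integrable (fun z => ‖g z‖ ^ 2) (volume.restrict s)) :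
    Integrable (fun z => f z * g z) (volume.restrict s) := by
  have h1 : MemLp f 2 (volume.restrict s) := (memLp_two_iff_integrable_sq_norm hf).mpr hf2
  have h2 : MemLp g 2 (volume.restrict s) := (memLp_two_iff_integrable_sq_norm hg).mpr hg2
  have hpqr : (1 : ℝ≥0∞) / 1 = 1 / 2 + 1 / 2 := by
    rw [div_one]
    exact (ENNReal.add_halves 1).symm
  have h4 : MemLp (f • g) 1 (volume.restrict s) := h2.smul (r := 1) h1
  have h5 := memLp_one_iff_integrable.mp h4
  exact h5

private lemma bergman_transform
    {Ω₁ Ω₂ : Set ℂ} (hΩ₁ : IsOpen Ω₁) (hΩ₂ : IsOpen Ω₂)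
    {φ Φ : ℂ → ℂ}
    (hφ : DifferentiableOn ℂ φ Ω₁) (hΦ : DifferentiableOn ℂ Φ Ω₂)
    (himg : φ '' Ω₁ = Ω₂)
    (hinv₁ : ∀ z ∈ Ω₁, Φ (φ z) = z) (hinv₂ : ∀ z ∈ Ω₂, φ (Φ z) = z)
    {K₁ K₂ : ℂ → ℂ → ℂ}
    (hK₁ : IsBergmanKernel Ω₁ K₁) (hK₂ : IsBergmanKernel Ω₂ K₂) :
    ∀ ζ ∈ Ω₂, ∀ z ∈ Ω₂,
      K₂ ζ z = deriv Φ ζ * K₁ (Φ ζ) (Φ z) * starRingEnd ℂ (deriv Φ z) := by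
  have hφmaps : Set.MapsTo φ Ω₁ Ω₂ := himg ▸ Set.mapsTo_image φ Ω₁
  have hΦmem : ∀ z ∈ Ω₂, Φ z ∈ Ω₁ := by
    intro z hz
    rw [← himg] at hz
    obtain ⟨u, hu, rfl⟩ := hz
    rw [hinv₁ u hu]; exact hu
  have hΦmaps : Set.MapsTo Φ Ω₂ Ω₁ := fun z hz => hΦmem z hz
  have hinj : Set.InjOn φ Ω₁ := fun u hu v hv h => by
    rw [← hinv₁ u hu, ← hinv₁ v hv, h]
  have hΦφ : ∀ u ∈ Ω₁, deriv Φ (φ u) * deriv φ u = 1 :=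
    deriv_comp_inverse hΩ₁ hΩ₂ hφ hΦ hφmaps hinv₁
  have hφΦ : ∀ z ∈ Ω₂, deriv φ (Φ z) * deriv Φ z = 1 :=
    deriv_comp_inverse hΩ₂ hΩ₁ hΦ hφ hΦmaps hinv₂
  -- pullback of Bergman functions
  have hpull : ∀ f : ℂ → ℂ, InBergmanSpace Ω₂ f →
      InBergmanSpace Ω₁ (fun u => f (φ u) * deriv φ u) := by
    intro f hf
    constructor
    · exact (hf.1.comp hφ hφmaps).mul (deriv_diffOn hΩ₁ hφ)
    · have h0 : IntegrableOn (fun ζ => ‖f ζ‖ ^ 2) (φ '' Ω₁) volume := by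
        rw [himg]; exact hf.2
      have h1 := (covInt hΩ₁ hφ hinj (fun ζ => ‖f ζ‖ ^ 2)).mp h0
      have h2 : (fun u => Complex.normSq (deriv φ u) * ‖f (φ u)‖ ^ 2)
          = fun u => ‖f (φ u) * deriv φ u‖ ^ 2 := by
        funext u
        rw [norm_mul, mul_pow, Complex.normSq_eq_norm_sq]
        ring
      rwa [h2] at h1
  intro ζ₀ hζ₀ z hz
  have hΦz : Φ z ∈ Ω₁ := hΦmem z hz
  set L : ℂ → ℂ := fun ζ => deriv Φ ζ * K₁ (Φ ζ) (Φ z) * starRingEnd ℂ (deriv Φ z) with hL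
  -- L reproduces
  have hrepL : ∀ f : ℂ → ℂ, InBergmanSpace Ω₂ f →
      (∫ ζ in Ω₂, f ζ * starRingEnd ℂ (L ζ)) = f z := by
    intro f hf
    have hg := hpull f hf
    have step1 : (∫ ζ in Ω₂, f ζ * starRingEnd ℂ (L ζ))
        = ∫ u in Ω₁, (Complex.normSq (deriv φ u) : ℂ) * (f (φ u) * starRingEnd ℂ (L (φ u))) := by
      rw [← himg, cov hΩ₁ hφ hinj]
    have step2 : (∫ u in Ω₁, (Complex.normSq (deriv φ u) : ℂ) *
          (f (φ u) * starRingEnd ℂ (L (φ u))))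
        = ∫ u in Ω₁, (f (φ u) * deriv φ u * starRingEnd ℂ (K₁ u (Φ z))) * deriv Φ z := by
      apply setIntegral_congr_fun hΩ₁.measurableSet
      intro u hu
      have hAB : deriv Φ (φ u) * deriv φ u = 1 := hΦφ u hu
      have h1 : starRingEnd ℂ (deriv Φ (φ u)) * starRingEnd ℂ (deriv φ u) = 1 := by
        rw [← map_mul, hAB, map_one]
      simp only [hL]
      rw [hinv₁ u hu]
      rw [show ((Complex.normSq (deriv φ u) : ℂ)) = deriv φ u * starRingEnd ℂ (deriv φ u)
        from (Complex.mul_conj _).symm]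
      simp only [map_mul, Complex.conj_conj]
      calc deriv φ u * starRingEnd ℂ (deriv φ u) *
            (f (φ u) * (starRingEnd ℂ (deriv Φ (φ u)) * starRingEnd ℂ (K₁ u (Φ z)) * deriv Φ z))
          = (starRingEnd ℂ (deriv Φ (φ u)) * starRingEnd ℂ (deriv φ u)) *
            (f (φ u) * deriv φ u * starRingEnd ℂ (K₁ u (Φ z)) * deriv Φ z) := by ring
        _ = f (φ u) * deriv φ u * starRingEnd ℂ (K₁ u (Φ z)) * deriv Φ z := by
            rw [h1, one_mul]
    rw [step1, step2, integral_mul_const]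
    rw [← hK₁.2 (fun u => f (φ u) * deriv φ u) hg (Φ z) hΦz]
    rw [hinv₂ z hz, mul_assoc, hφΦ z hz, mul_one]
  -- L is in the Bergman space
  have hLdiff : DifferentiableOn ℂ L Ω₂ := by
    have hK1d : DifferentiableOn ℂ (fun w => K₁ w (Φ z)) Ω₁ := (hK₁.1 (Φ z) hΦz).1
    exact ((deriv_diffOn hΩ₂ hΦ).mul (hK1d.comp hΦ hΦmaps)).mul_const _
  have hLint : Integrable (fun ζ => ‖L ζ‖ ^ 2) (volume.restrict Ω₂) := by
    have hbase : IntegrableOn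
        (fun u => ‖starRingEnd ℂ (deriv Φ z)‖ ^ 2 * ‖K₁ u (Φ z)‖ ^ 2) Ω₁ volume :=
      (hK₁.1 (Φ z) hΦz).2.const_mul _
    have heq : Set.EqOn (fun u => ‖starRingEnd ℂ (deriv Φ z)‖ ^ 2 * ‖K₁ u (Φ z)‖ ^ 2)
        (fun u => Complex.normSq (deriv φ u) * ‖L (φ u)‖ ^ 2) Ω₁ := by
      intro u hu
      simp only [hL]
      rw [hinv₁ u hu]
      have hAB : deriv Φ (φ u) * deriv φ u = 1 := hΦφ u hu
      have hn : ‖deriv Φ (φ u)‖ * ‖deriv φ u‖ = 1 := by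
        rw [← norm_mul, hAB, norm_one]
      simp only [norm_mul, mul_pow, Complex.normSq_eq_norm_sq]
      have ha2 : ‖deriv Φ (φ u)‖ ^ 2 * ‖deriv φ u‖ ^ 2 = 1 := by
        rw [← mul_pow, hn, one_pow]
      linear_combination (-(‖K₁ u (Φ z)‖ ^ 2 * ‖starRingEnd ℂ (deriv Φ z)‖ ^ 2)) * ha2
    have h1 : IntegrableOn (fun u => Complex.normSq (deriv φ u) * ‖L (φ u)‖ ^ 2) Ω₁ volume :=
      hbase.congr_fun heq hΩ₁.measurableSet
    have h2 := (covInt hΩ₁ hφ hinj (fun ζ => ‖L ζ‖ ^ 2)).mpr h1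
    rw [himg] at h2
    exact h2
  -- uniqueness
  have hK₂z := hK₂.1 z hz
  set h : ℂ → ℂ := fun ζ => L ζ - K₂ ζ z with hh
  have hhdiff : DifferentiableOn ℂ h Ω₂ := hLdiff.sub hK₂z.1
  have hLsm : AEStronglyMeasurable L (volume.restrict Ω₂) :=
    hLdiff.continuousOn.aestronglyMeasurable hΩ₂.measurableSet
  have hKsm : AEStronglyMeasurable (fun ζ => K₂ ζ z) (volume.restrict Ω₂) :=
    hK₂z.1.continuousOn.aestronglyMeasurable hΩ₂.measurableSet
  have hhsm : AEStronglyMeasurable h (volume.restrict Ω₂) :=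
    hhdiff.continuousOn.aestronglyMeasurable hΩ₂.measurableSet
  have hL2 : MemLp L 2 (volume.restrict Ω₂) := (memLp_two_iff_integrable_sq_norm hLsm).mpr hLint
  have hK2 : MemLp (fun ζ => K₂ ζ z) 2 (volume.restrict Ω₂) :=
    (memLp_two_iff_integrable_sq_norm hKsm).mpr hK₂z.2
  have hh2 : MemLp h 2 (volume.restrict Ω₂) := hL2.sub hK2
  have hhint : Integrable (fun ζ => ‖h ζ‖ ^ 2) (volume.restrict Ω₂) :=
    (memLp_two_iff_integrable_sq_norm hhsm).mp hh2
  have hhB : InBergmanSpace Ω₂ h := ⟨hhdiff, hhint⟩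
  -- integrability of the products
  have hconj : ∀ (F : ℂ → ℂ), AEStronglyMeasurable F (volume.restrict Ω₂) →
      Integrable (fun ζ => ‖F ζ‖ ^ 2) (volume.restrict Ω₂) →
      Integrable (fun ζ => h ζ * starRingEnd ℂ (F ζ)) (volume.restrict Ω₂) := by
    intro F hFsm hFint
    apply integrable_mul_L2 hhsm
    · exact (Complex.continuous_conj.comp_aestronglyMeasurable hFsm)
    · exact hhint
    · have : (fun ζ => ‖starRingEnd ℂ (F ζ)‖ ^ 2) = fun ζ => ‖F ζ‖ ^ 2 := by
        funext ζ; rw [RCLike.norm_conj]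
      rwa [this]
  have hmul1 := hconj L hLsm hLint
  have hmul2 := hconj (fun ζ => K₂ ζ z) hKsm hK₂z.2
  have e1 : (∫ ζ in Ω₂, h ζ * starRingEnd ℂ (L ζ)) = h z := hrepL h hhB
  have e2 : (∫ ζ in Ω₂, h ζ * starRingEnd ℂ (K₂ ζ z)) = h z := (hK₂.2 h hhB z hz).symm
  have e3 : (∫ ζ in Ω₂, h ζ * starRingEnd ℂ (h ζ)) = 0 := by
    have hfn : (fun ζ => h ζ * starRingEnd ℂ (h ζ))
        = fun ζ => h ζ * starRingEnd ℂ (L ζ) - h ζ * starRingEnd ℂ (K₂ ζ z) := by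
      funext ζ
      simp only [hh, map_sub]
      ring
    rw [hfn, integral_sub hmul1 hmul2, e1, e2, sub_self]
  have e4 : (∫ ζ in Ω₂, (‖h ζ‖ ^ 2 : ℝ)) = 0 := by
    have hfn : (fun ζ => h ζ * starRingEnd ℂ (h ζ)) = fun ζ => ((‖h ζ‖ ^ 2 : ℝ) : ℂ) := by
      funext ζ
      rw [Complex.mul_conj, Complex.normSq_eq_norm_sq]
    rw [hfn] at e3
    have hfint : Integrable (fun ζ => ((‖h ζ‖ ^ 2 : ℝ) : ℂ)) (volume.restrict Ω₂) :=
      hhint.ofReal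
    have hre := integral_re (𝕜 := ℂ) hfint
    have hre2 : (∫ ζ in Ω₂, RCLike.re ((‖h ζ‖ ^ 2 : ℝ) : ℂ)) = ∫ ζ in Ω₂, (‖h ζ‖ ^ 2 : ℝ) := by
      congr 1
    rw [hre2] at hre
    rw [hre, e3]
    simp
  have e5 : (fun ζ => ‖h ζ‖ ^ 2) =ᵐ[volume.restrict Ω₂] 0 :=
    (integral_eq_zero_iff_of_nonneg (fun ζ => sq_nonneg _) hhint).mp e4
  have e6 : ∀ᵐ ζ ∂(volume.restrict Ω₂), h ζ = 0 := by
    filter_upwards [e5] with ζ hζ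
    have : ‖h ζ‖ ^ 2 = 0 := hζ
    have h0 : ‖h ζ‖ = 0 := by
      nlinarith [norm_nonneg (h ζ)]
    exact norm_eq_zero.mp h0
  -- from a.e. zero and continuity to everywhere zero
  have hzero : h ζ₀ = 0 := by
    by_contra hne
    have hmem : {ζ | h ζ ≠ 0} ∈ nhdsWithin ζ₀ Ω₂ := by
      have hc : ContinuousWithinAt h Ω₂ ζ₀ := hhdiff.continuousOn ζ₀ hζ₀
      exact hc (isOpen_compl_singleton.mem_nhds hne)
    rw [nhdsWithin_eq_nhds.mpr (hΩ₂.mem_nhds hζ₀)] at hmem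
    obtain ⟨t, hts, htopen, hζt⟩ := mem_nhds_iff.mp hmem
    have hVopen : IsOpen (t ∩ Ω₂) := htopen.inter hΩ₂
    have hVpos : 0 < (volume : Measure ℂ) (t ∩ Ω₂) := hVopen.measure_pos volume ⟨ζ₀, hζt, hζ₀⟩
    have hae0 : (volume : Measure ℂ) ({ζ | h ζ ≠ 0} ∩ Ω₂) = 0 := by
      have := ae_iff.mp e6
      rwa [Measure.restrict_apply' hΩ₂.measurableSet] at this
    have hsub : t ∩ Ω₂ ⊆ {ζ | h ζ ≠ 0} ∩ Ω₂ := fun ζ hζ => ⟨hts hζ.1, hζ.2⟩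
    have := measure_mono (μ := (volume : Measure ℂ)) hsub
    rw [hae0] at this
    exact absurd (le_antisymm this zero_le) (ne_of_gt hVpos)
  have hfinal : L ζ₀ = K₂ ζ₀ z := sub_eq_zero.mp hzero
  exact hfinal.symm

/-- If `Ω₁` is a quadrature domain of finite area (so that
`1 ≡ Σ c_{jm} K₁^{(m)}(z, w_j)` on `Ω₁`) and `φ : Ω₁ → Ω₂` is a biholomorphism
with inverse `Φ`, then `Φ'(z) = Σ c_{jm} (∂^m/∂w̄^m)[K₂(z, φ(w)) conj(φ'(w))]|_{w=w_j}`
on `Ω₂`; in particular `Φ'` is a finite linear combination of the functions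
`z ↦ (∂^m/∂W̄^m) K₂(z, W)` at points `W ∈ Ω₂`. -/
theorem inverse_map_derivative_is_kernel_combination
    (Ω₁ Ω₂ : Set ℂ) (hΩ₁ : IsOpen Ω₁) (hΩ₂ : IsOpen Ω₂)
    (hconn₁ : IsConnected Ω₁) (hconn₂ : IsConnected Ω₂)
    (hfin : volume Ω₁ < ⊤)
    (φ Φ : ℂ → ℂ)
    (hφ : DifferentiableOn ℂ φ Ω₁) (hΦ : DifferentiableOn ℂ Φ Ω₂)
    (himg : φ '' Ω₁ = Ω₂)
    (hinv₁ : ∀ z ∈ Ω₁, Φ (φ z) = z) (hinv₂ : ∀ z ∈ Ω₂, φ (Φ z) = z)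
    (K₁ K₂ : ℂ → ℂ → ℂ)
    (hK₁ : IsBergmanKernel Ω₁ K₁) (hK₂ : IsBergmanKernel Ω₂ K₂)
    (N : ℕ) (n : Fin N → ℕ) (w : Fin N → ℂ) (hw : ∀ j, w j ∈ Ω₁)
    (c : Fin N → ℕ → ℂ)
    -- the quadrature-domain identity `1 ≡ Σ c_{jm} K₁^{(m)}(z, w_j)` on `Ω₁`
    (hquad : ∀ z ∈ Ω₁, (1 : ℂ) =
      ∑ j, ∑ m ∈ Finset.range (n j + 1),
        c j m * antibarDeriv m (fun u => K₁ z u) (w j)) :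
    (∀ z ∈ Ω₂, deriv Φ z =
      ∑ j, ∑ m ∈ Finset.range (n j + 1),
        c j m * antibarDeriv m (fun u => K₂ z (φ u) * starRingEnd ℂ (deriv φ u)) (w j)) ∧
    ∃ (M : ℕ) (W : Fin M → ℂ) (_ : ∀ k, W k ∈ Ω₂) (p : Fin M → ℕ) (d : Fin M → ℕ → ℂ),
      ∀ z ∈ Ω₂, deriv Φ z =
        ∑ k, ∑ m ∈ Finset.range (p k + 1),
          d k m * antibarDeriv m (fun u => K₂ z u) (W k) := by
  classical
  have hφmaps : Set.MapsTo φ Ω₁ Ω₂ := himg ▸ Set.mapsTo_image φ Ω₁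
  have hΦmem : ∀ z ∈ Ω₂, Φ z ∈ Ω₁ := by
    intro z hz
    rw [← himg] at hz
    obtain ⟨u, hu, rfl⟩ := hz
    rw [hinv₁ u hu]; exact hu
  have hΦφ : ∀ u ∈ Ω₁, deriv Φ (φ u) * deriv φ u = 1 :=
    deriv_comp_inverse hΩ₁ hΩ₂ hφ hΦ hφmaps hinv₁
  have htrans := bergman_transform hΩ₁ hΩ₂ hφ hΦ himg hinv₁ hinv₂ hK₁ hK₂
  have hlaw : ∀ z ∈ Ω₂, ∀ u ∈ Ω₁,
      deriv Φ z * K₁ (Φ z) u = K₂ z (φ u) * starRingEnd ℂ (deriv φ u) := by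
    intro z hz u hu
    have hΦz : Φ z ∈ Ω₁ := hΦmem z hz
    have h1 : K₂ (φ u) z = deriv Φ (φ u) * K₁ (Φ (φ u)) (Φ z) * starRingEnd ℂ (deriv Φ z) :=
      htrans (φ u) (hφmaps hu) z hz
    rw [hinv₁ u hu] at h1
    have h2 : K₂ z (φ u) = starRingEnd ℂ (K₂ (φ u) z) :=
      (kernel_symm hK₂ (hφmaps hu) hz).symm
    have h3 : K₁ (Φ z) u = starRingEnd ℂ (K₁ u (Φ z)) :=
      (kernel_symm hK₁ hu hΦz).symm
    have hAB1 : starRingEnd ℂ (deriv Φ (φ u)) * starRingEnd ℂ (deriv φ u) = 1 := by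
      rw [← map_mul, hΦφ u hu, map_one]
    rw [h2, h1, h3]
    simp only [map_mul, Complex.conj_conj]
    linear_combination (-(deriv Φ z * starRingEnd ℂ (K₁ u (Φ z)))) * hAB1
  have part1 : ∀ z ∈ Ω₂, deriv Φ z =
      ∑ j, ∑ m ∈ Finset.range (n j + 1),
        c j m * antibarDeriv m (fun u => K₂ z (φ u) * starRingEnd ℂ (deriv φ u)) (w j) := by
    intro z hz
    have hΦz : Φ z ∈ Ω₁ := hΦmem z hz
    have hq := hquad (Φ z) hΦz
    have key : ∀ (j : Fin N) (m : ℕ),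
        deriv Φ z * antibarDeriv m (fun u => K₁ (Φ z) u) (w j)
        = antibarDeriv m (fun u => K₂ z (φ u) * starRingEnd ℂ (deriv φ u)) (w j) := by
      intro j m
      unfold antibarDeriv
      rw [show deriv Φ z *
          starRingEnd ℂ (iteratedDeriv m (fun u => starRingEnd ℂ (K₁ (Φ z) u)) (w j))
          = starRingEnd ℂ (starRingEnd ℂ (deriv Φ z) *
              iteratedDeriv m (fun u => starRingEnd ℂ (K₁ (Φ z) u)) (w j)) from by
        rw [map_mul, Complex.conj_conj]]
      congr 1
      rw [← iteratedDeriv_cmul (starRingEnd ℂ (deriv Φ z)) m _ (w j)]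
      apply iteratedDeriv_congr' m
      filter_upwards [hΩ₁.mem_nhds (hw j)] with u hu
      rw [← map_mul, hlaw z hz u hu]
    calc deriv Φ z = deriv Φ z * 1 := (mul_one _).symm
      _ = deriv Φ z * ∑ j, ∑ m ∈ Finset.range (n j + 1),
            c j m * antibarDeriv m (fun u => K₁ (Φ z) u) (w j) := by rw [← hq]
      _ = ∑ j, ∑ m ∈ Finset.range (n j + 1),
            c j m * antibarDeriv m (fun u => K₂ z (φ u) * starRingEnd ℂ (deriv φ u)) (w j) := by
          rw [Finset.mul_sum]
          refine Finset.sum_congr rfl fun j _ => ?_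
          rw [Finset.mul_sum]
          refine Finset.sum_congr rfl fun m _ => ?_
          rw [← mul_assoc, mul_comm (deriv Φ z) (c j m), mul_assoc, key j m]
  refine ⟨part1, ?_⟩
  have hdφ : DifferentiableOn ℂ (deriv φ) Ω₁ := deriv_diffOn hΩ₁ hφ
  set a : Fin N → ℕ → ℕ → ℂ := fun j m =>
    (faa_di_bruno hΩ₁ hΩ₂ hφ hφmaps (hw j) m (deriv φ) hdφ).choose with ha
  have spec : ∀ (j : Fin N) (m : ℕ), ∀ F : ℂ → ℂ, DifferentiableOn ℂ F Ω₂ →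
      iteratedDeriv m (fun u => F (φ u) * deriv φ u) (w j) =
        ∑ p ∈ Finset.range (m+1), a j m p * iteratedDeriv p F (φ (w j)) := fun j m =>
    (faa_di_bruno hΩ₁ hΩ₂ hφ hφmaps (hw j) m (deriv φ) hdφ).choose_spec
  refine ⟨N, fun j => φ (w j), fun j => hφmaps (hw j), n,
    fun j q => ∑ m ∈ Finset.Icc q (n j), c j m * starRingEnd ℂ (a j m q), ?_⟩
  intro z hz
  have hFdiff : DifferentiableOn ℂ (fun ζ => K₂ ζ z) Ω₂ := (hK₂.1 z hz).1
  have habd : ∀ (j : Fin N) (m : ℕ),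
      antibarDeriv m (fun u => K₂ z (φ u) * starRingEnd ℂ (deriv φ u)) (w j)
      = starRingEnd ℂ (iteratedDeriv m (fun u => K₂ (φ u) z * deriv φ u) (w j)) := by
    intro j m
    unfold antibarDeriv
    congr 1
    apply iteratedDeriv_congr' m
    filter_upwards [hΩ₁.mem_nhds (hw j)] with u hu
    rw [map_mul, Complex.conj_conj, kernel_symm hK₂ hz (hφmaps hu)]
  have hfaa : ∀ (j : Fin N) (m : ℕ),
      iteratedDeriv m (fun u => K₂ (φ u) z * deriv φ u) (w j)
      = ∑ p ∈ Finset.range (m+1), a j m p * iteratedDeriv p (fun ζ => K₂ ζ z) (φ (w j)) :=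
    fun j m => spec j m (fun ζ => K₂ ζ z) hFdiff
  have hI : ∀ (p : ℕ) (j : Fin N), antibarDeriv p (fun u => K₂ z u) (φ (w j))
      = starRingEnd ℂ (iteratedDeriv p (fun ζ => K₂ ζ z) (φ (w j))) := by
    intro p j
    unfold antibarDeriv
    congr 1
    apply iteratedDeriv_congr' p
    filter_upwards [hΩ₂.mem_nhds (hφmaps (hw j))] with ζ hζ
    exact kernel_symm hK₂ hz hζ
  rw [part1 z hz]
  refine Finset.sum_congr rfl fun j _ => ?_
  have lhs_eq : ∀ m ∈ Finset.range (n j + 1),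
      c j m * antibarDeriv m (fun u => K₂ z (φ u) * starRingEnd ℂ (deriv φ u)) (w j)
      = ∑ p ∈ Finset.range (m+1),
          (c j m * starRingEnd ℂ (a j m p)) * antibarDeriv p (fun u => K₂ z u) (φ (w j)) := by
    intro m _
    rw [habd j m, hfaa j m, map_sum, Finset.mul_sum]
    refine Finset.sum_congr rfl fun p _ => ?_
    rw [map_mul, hI p j]
    ring
  rw [Finset.sum_congr rfl lhs_eq]
  rw [Finset.sum_comm' (s := Finset.range (n j + 1)) (t := fun m => Finset.range (m+1))
    (t' := Finset.range (n j + 1)) (s' := fun p => Finset.Icc p (n j))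
    (fun m p => by simp only [Finset.mem_range, Finset.mem_Icc]; omega)]
  refine Finset.sum_congr rfl fun q _ => ?_
  rw [← Finset.sum_mul]
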